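/- Let δ > 0 and let n > 0 be a real number with n δ² > 2. Define g : ℂ² → ℂ² by g(z, w) = (z + n w², w). Then the image g(Δ²) of the open unit polydisc contains no open Euclidean ball of radius δ: for every (α₀, β₀) ∈ ℂ² there exists ζ ∈ ℂ with |ζ| < δ such that (α₀, β₀ + ζ) ∉ g(Δ²). -/

import Mathlib

/-- **Harris' counterexample to Landau in ℂ².** If `n δ² > 2` then the image of the open
unit polydisc under `g(z,w) = (z + n w², w)` contains no open Euclidean ball of radius
`δ`: for every `(α₀, β₀)` some point `(α₀, β₀ + ζ)` with `|ζ| < δ` is missed. -/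
theorem harris_counterexample (δ n : ℝ) (hδ : 0 < δ) (hn : 0 < n) (h : 2 < n * δ ^ 2) :
    ∀ α₀ β₀ : ℂ, ∃ ζ : ℂ, ‖ζ‖ < δ ∧
      (α₀, β₀ + ζ) ∉
        (fun p : ℂ × ℂ => (p.1 + (n : ℂ) * p.2 ^ 2, p.2)) ''
          {p : ℂ × ℂ | ‖p.1‖ < 1 ∧ ‖p.2‖ < 1} := by
  intro α₀ β₀
  by_cases hmem : (α₀, β₀) ∈
      (fun p : ℂ × ℂ => (p.1 + (n : ℂ) * p.2 ^ 2, p.2)) ''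
        {p : ℂ × ℂ | ‖p.1‖ < 1 ∧ ‖p.2‖ < 1}
  · obtain ⟨⟨z, w⟩, ⟨hz, hw⟩, heq⟩ := hmem
    simp only [Prod.mk.injEq] at heq
    obtain ⟨h1, h2⟩ := heq
    subst h2
    have hz1 : ‖z‖ < 1 := hz
    -- choose r with r < δ and n r² > 2
    set r : ℝ := Real.sqrt ((2 / n + δ ^ 2) / 2) with hrdef
    have hrnn : (0:ℝ) ≤ (2 / n + δ ^ 2) / 2 := by positivity
    have hr2 : r ^ 2 = (2 / n + δ ^ 2) / 2 := Real.sq_sqrt hrnn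
    have hrpos : 0 ≤ r := Real.sqrt_nonneg _
    have hcn : n * (2 / n) = 2 := by field_simp
    have h2n : 2 / n < δ ^ 2 := by
      rw [div_lt_iff₀ hn]; linarith
    have hrδ : r < δ := by nlinarith
    have hnr2 : 2 < n * r ^ 2 := by nlinarith
    -- phase of w
    set u : ℂ := if w = 0 then 1 else w / ((‖w‖ : ℝ) : ℂ) with hudef
    have hbnn : (0:ℝ) ≤ ‖w‖ := norm_nonneg w
    have hu1 : ‖u‖ = 1 := by
      rw [hudef]
      split_ifs with hb
      · simp
      · rw [norm_div, Complex.norm_real, Real.norm_of_nonneg hbnn,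
          div_self (norm_ne_zero_iff.mpr hb)]
    set b : ℝ := ‖w‖ with hbdef
    have hbu : w = (b : ℂ) * u := by
      rw [hudef]
      split_ifs with hb
      · simp [hbdef, hb]
      · have : ((b : ℝ) : ℂ) ≠ 0 := by
          simpa [hbdef] using hb
        field_simp
    refine ⟨(r : ℂ) * u, ?_, ?_⟩
    · rw [norm_mul, hu1, Complex.norm_real, Real.norm_of_nonneg hrpos]
      simpa using hrδ
    · rintro ⟨⟨z', w'⟩, ⟨hz', hw'⟩, heq'⟩
      simp only [Prod.mk.injEq] at heq'
      obtain ⟨h1', h2'⟩ := heq'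
      subst h2'
      have hz1' : ‖z'‖ < 1 := hz'
      -- key identity
      have key : ‖(n:ℂ) * ((w + (r:ℂ) * u) ^ 2 - w ^ 2)‖
          = n * (2 * b * r + r ^ 2) := by
        have hX : (w + (r:ℂ) * u) ^ 2 - w ^ 2
            = ((2 * b * r + r ^ 2 : ℝ) : ℂ) * u ^ 2 := by
          rw [hbu]; push_cast; ring
        have hXnn : (0:ℝ) ≤ 2 * b * r + r ^ 2 := by positivity
        rw [hX, norm_mul, norm_mul, norm_pow, hu1, Complex.norm_real,
          Complex.norm_real, Real.norm_of_nonneg hXnn, Real.norm_of_nonneg hn.le, one_pow, mul_one]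
      have hd : (n:ℂ) * ((w + (r:ℂ) * u) ^ 2 - w ^ 2) = z - z' := by
        linear_combination h1' - h1
      rw [hd] at key
      have hle : ‖z - z'‖ ≤ ‖z‖ + ‖z'‖ :=
        norm_sub_le z z'
      nlinarith [mul_nonneg (mul_nonneg hn.le (by positivity : (0:ℝ) ≤ 2 * b)) hrpos]
  · exact ⟨0, by simpa using hδ, by simpa using hmem⟩
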